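/- Suppose the MPDA rule D^M is manipulable at profile P by a coalition A' via misreports P̃_{A'}. Then every woman weakly prefers her match at the manipulated profile to her match at the true profile: D^M_w(P̃_{A'}, P_{-A'}) R_w D^M_w(P) for all women w (with respect to true preferences). -/

import Mathlib

/-- A one-to-one matching between men `M` and women `W`; `none` means unmatched. -/
structure Matching (M W : Type*) where
  menMatch : M → Option W
  womenMatch : W → Option M
  consistent : ∀ m w, menMatch m = some w ↔ womenMatch w = some m

/-- A preference profile: each man has a strict linear order over `W ∪ {∅}`
(encoded as `Option W`, with `none` the outside option), and each woman over `M ∪ {∅}`. -/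
structure Profile (M W : Type*) where
  menPref : M → LinearOrder (Option W)
  womenPref : W → LinearOrder (Option M)

variable {M W : Type*}

def IndividuallyRational (μ : Matching M W) (P : Profile M W) : Prop :=
  (∀ m, (P.menPref m).le none (μ.menMatch m)) ∧
  (∀ w, (P.womenPref w).le none (μ.womenMatch w))

def Blocks (m : M) (w : W) (μ : Matching M W) (P : Profile M W) : Prop :=
  (P.menPref m).lt (μ.menMatch m) (some w) ∧
  (P.womenPref w).lt (μ.womenMatch w) (some m)

def Stable (μ : Matching M W) (P : Profile M W) : Prop :=
  IndividuallyRational μ P ∧ ∀ m w, ¬ Blocks m w μ P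

/-- The men-optimal stable matching: stable, and every man weakly prefers it to
any stable matching.  This characterizes the outcome of the men-proposing
deferred acceptance (MPDA) algorithm. -/
def MenOptimalStable (μ : Matching M W) (P : Profile M W) : Prop :=
  Stable μ P ∧
    ∀ ν : Matching M W, Stable ν P → ∀ m, (P.menPref m).le (ν.menMatch m) (μ.menMatch m)

/-- The women-optimal stable matching, i.e. the outcome of women-proposing DA. -/
def WomenOptimalStable (μ : Matching M W) (P : Profile M W) : Prop :=
  Stable μ P ∧
    ∀ ν : Matching M W, Stable ν P → ∀ w, (P.womenPref w).le (ν.womenMatch w) (μ.womenMatch w)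

def Matching.empty (M W : Type*) : Matching M W :=
  ⟨fun _ => none, fun _ => none, by intro m w; simp⟩

/-- The men-proposing deferred acceptance rule `D^M`. -/
noncomputable def mpda (P : Profile M W) : Matching M W :=
  letI := Classical.dec (∃ μ : Matching M W, MenOptimalStable μ P)
  if h : ∃ μ : Matching M W, MenOptimalStable μ P then h.choose else Matching.empty M W

/-- The women-proposing deferred acceptance rule `D^W`. -/
noncomputable def wpda (P : Profile M W) : Matching M W :=
  letI := Classical.dec (∃ μ : Matching M W, WomenOptimalStable μ P)
  if h : ∃ μ : Matching M W, WomenOptimalStable μ P then h.choose else Matching.empty M W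

/-- A domain of preference profiles: a set of admissible preferences for each agent. -/
structure Domain (M W : Type*) where
  men : M → Set (LinearOrder (Option W))
  women : W → Set (LinearOrder (Option M))

/-- Membership of a profile in (the product domain generated by) a domain. -/
def Domain.mem (D : Domain M W) (P : Profile M W) : Prop :=
  (∀ m, P.menPref m ∈ D.men m) ∧ (∀ w, P.womenPref w ∈ D.women w)

def Profile.updateMan [DecidableEq M] (P : Profile M W) (m : M)
    (p : LinearOrder (Option W)) : Profile M W :=
  ⟨Function.update P.menPref m p, P.womenPref⟩

def Profile.updateWoman [DecidableEq W] (P : Profile M W) (w : W)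
    (p : LinearOrder (Option M)) : Profile M W :=
  ⟨P.menPref, Function.update P.womenPref w p⟩

/-- A matching rule is stable on a domain if it selects a stable matching at
every profile of the domain. -/
def StableOn (D : Domain M W) (φ : Profile M W → Matching M W) : Prop :=
  ∀ P, D.mem P → Stable (φ P) P

/-- Strategy-proofness on a domain: no single agent can strictly gain by
misreporting an admissible preference. -/
def StrategyProofOn [DecidableEq M] [DecidableEq W] (D : Domain M W)
    (φ : Profile M W → Matching M W) : Prop :=
  ∀ P, D.mem P →
    (∀ m p, p ∈ D.men m →
      (P.menPref m).le ((φ (P.updateMan m p)).menMatch m) ((φ P).menMatch m)) ∧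
    (∀ w p, p ∈ D.women w →
      (P.womenPref w).le ((φ (P.updateWoman w p)).womenMatch w) ((φ P).womenMatch w))

/-- A coalition `(Sm, Sw)` manipulates `φ` at `P` via the admissible profile `Q`
(which agrees with `P` outside the coalition): every coalition member is
strictly better off at `φ Q` than at `φ P` according to true preferences. -/
def Manipulation (D : Domain M W) (φ : Profile M W → Matching M W)
    (P Q : Profile M W) (Sm : Set M) (Sw : Set W) : Prop :=
  D.mem P ∧ D.mem Q ∧
  (∀ m ∉ Sm, Q.menPref m = P.menPref m) ∧
  (∀ w ∉ Sw, Q.womenPref w = P.womenPref w) ∧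
  (∀ m ∈ Sm, (P.menPref m).lt ((φ P).menMatch m) ((φ Q).menMatch m)) ∧
  (∀ w ∈ Sw, (P.womenPref w).lt ((φ P).womenMatch w) ((φ Q).womenMatch w))

/-- Group strategy-proofness on a domain: no nonempty coalition can manipulate. -/
def GroupStrategyProofOn (D : Domain M W) (φ : Profile M W → Matching M W) : Prop :=
  ¬ ∃ (P Q : Profile M W) (Sm : Set M) (Sw : Set W),
      (Sm.Nonempty ∨ Sw.Nonempty) ∧ Manipulation D φ P Q Sm Sw

/-- Top dominance for women. -/
def TopDominanceWomen (D : Domain M W) : Prop :=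
  ∀ w : W, ∀ x : M, ∀ y z : Option M,
    (∃ P ∈ D.women w, P.lt y (some x) ∧ P.lt z y ∧ P.le none y) →
      ¬ ∃ P' ∈ D.women w, P'.lt z (some x) ∧ P'.lt y z ∧ P'.le none z

/-- Top dominance for men. -/
def TopDominanceMen (D : Domain M W) : Prop :=
  ∀ m : M, ∀ x : W, ∀ y z : Option W,
    (∃ P ∈ D.men m, P.lt y (some x) ∧ P.lt z y ∧ P.le none y) →
      ¬ ∃ P' ∈ D.men m, P'.lt z (some x) ∧ P'.lt y z ∧ P'.le none z

/-- Unrestricted top pairs for men. -/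
def UnrestrictedTopPairsMen (D : Domain M W) : Prop :=
  ∀ m : M,
    (∀ w w' : W, w ≠ w' → ∃ P ∈ D.men m, P.lt (some w') (some w) ∧
        ∀ z : Option W, z ≠ some w → z ≠ some w' → P.lt z (some w')) ∧
    (∀ w : W, ∃ P ∈ D.men m, P.lt none (some w) ∧
        ∀ z : Option W, z ≠ some w → z ≠ none → P.lt z none) ∧
    (∃ P ∈ D.men m, ∀ z : Option W, z ≠ none → P.lt z none)

/-- Unrestricted top pairs for women. -/
def UnrestrictedTopPairsWomen (D : Domain M W) : Prop :=
  ∀ w : W,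
    (∀ m m' : M, m ≠ m' → ∃ P ∈ D.women w, P.lt (some m') (some m) ∧
        ∀ z : Option M, z ≠ some m → z ≠ some m' → P.lt z (some m')) ∧
    (∀ m : M, ∃ P ∈ D.women w, P.lt none (some m) ∧
        ∀ z : Option M, z ≠ some m → z ≠ none → P.lt z none) ∧
    (∃ P ∈ D.women w, ∀ z : Option M, z ≠ none → P.lt z none)

/-- Single-peakedness of a preference over `Option α` with respect to a prior
order `ord` on `α`:  moving away from the peak (the most preferred element of
`α`) on either side makes the preference decline. -/
def SinglePeaked {α : Type*} (ord : LinearOrder α) (P : LinearOrder (Option α)) : Prop :=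
  ∀ peak : α, (∀ a : α, P.le (some a) (some peak)) →
    ∀ a b : α, ((ord.le peak a ∧ ord.lt a b) ∨ (ord.lt b a ∧ ord.le a peak)) →
      P.lt (some b) (some a)

/-- The maximal single-peaked domain with respect to orders on men and women. -/
def maximalSinglePeakedDomain (ordM : LinearOrder M) (ordW : LinearOrder W) : Domain M W :=
  ⟨fun _ => {P | SinglePeaked ordW P}, fun _ => {P | SinglePeaked ordM P}⟩

/-- A domain is single-peaked if all admissible preferences are single-peaked. -/
def Domain.SinglePeakedDomain (D : Domain M W) (ordM : LinearOrder M)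
    (ordW : LinearOrder W) : Prop :=
  (∀ m, ∀ P ∈ D.men m, SinglePeaked ordW P) ∧ (∀ w, ∀ P ∈ D.women w, SinglePeaked ordM P)

/-- Anonymity: all men share the same admissible set, and all women do too. -/
def Domain.Anonymous (D : Domain M W) : Prop :=
  (∀ m m' : M, D.men m = D.men m') ∧ (∀ w w' : W, D.women w = D.women w')

/-- Cyclical inclusion for men. -/
def CyclicalInclusionMen (D : Domain M W) : Prop :=
  ∀ m : M,
    (∃ P ∈ D.men m, ∀ z : Option W, z ≠ none → P.lt z none) ∧
    (∀ w w' : W,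
      (∃ P ∈ D.men m, P.lt (some w') (some w) ∧ P.lt none (some w')) →
      (∃ P ∈ D.men m, P.lt (some w) (some w') ∧ P.lt none (some w)))

/-- Cyclical inclusion for women. -/
def CyclicalInclusionWomen (D : Domain M W) : Prop :=
  ∀ w : W,
    (∃ P ∈ D.women w, ∀ z : Option M, z ≠ none → P.lt z none) ∧
    (∀ m m' : M,
      (∃ P ∈ D.women w, P.lt (some m') (some m) ∧ P.lt none (some m')) →
      (∃ P ∈ D.women w, P.lt (some m) (some m') ∧ P.lt none (some m)))

/-- The unrestricted domain: every strict linear order is admissible. -/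
def fullDomain (M W : Type*) : Domain M W :=
  ⟨fun _ => Set.univ, fun _ => Set.univ⟩


/-- A coalition `(Sm, Sw)` manipulates the MPDA rule at `P` via the misreport
profile `Q` (which agrees with `P` outside the coalition): every coalition
member is strictly better off under true preferences. -/
def MpdaManipulates (P Q : Profile M W) (Sm : Set M) (Sw : Set W) : Prop :=
  (∀ m ∉ Sm, Q.menPref m = P.menPref m) ∧
  (∀ w ∉ Sw, Q.womenPref w = P.womenPref w) ∧
  (∀ m ∈ Sm, (P.menPref m).lt ((mpda P).menMatch m) ((mpda Q).menMatch m)) ∧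
  (∀ w ∈ Sw, (P.womenPref w).lt ((mpda P).womenMatch w) ((mpda Q).womenMatch w))

/-! ### Auxiliary lemmas for working with `LinearOrder` values -/

section AuxOrder
variable {α : Type*}

theorem auxLO_le_refl (L : LinearOrder α) (a : α) : L.le a a := by
  letI := L; exact le_refl a

theorem auxLO_le_trans (L : LinearOrder α) {a b c : α} (h1 : L.le a b) (h2 : L.le b c) :
    L.le a c := by letI := L; exact le_trans h1 h2

theorem auxLO_antisymm (L : LinearOrder α) {a b : α} (h1 : L.le a b) (h2 : L.le b a) : a = b := by
  letI := L; exact le_antisymm h1 h2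

theorem auxLO_not_lt (L : LinearOrder α) {a b : α} : ¬ L.lt a b ↔ L.le b a := by
  letI := L; exact not_lt

theorem auxLO_not_le (L : LinearOrder α) {a b : α} : ¬ L.le a b ↔ L.lt b a := by
  letI := L; exact not_le

theorem auxLO_le_of_lt (L : LinearOrder α) {a b : α} (h : L.lt a b) : L.le a b := by
  letI := L; exact le_of_lt h

theorem auxLO_ne_of_lt (L : LinearOrder α) {a b : α} (h : L.lt a b) : a ≠ b := by
  letI := L; exact ne_of_lt h

theorem auxLO_lt_of_le_of_ne (L : LinearOrder α) {a b : α} (h1 : L.le a b) (h2 : a ≠ b) :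
    L.lt a b := by letI := L; exact lt_of_le_of_ne h1 h2

theorem auxLO_lt_of_le_of_lt (L : LinearOrder α) {a b c : α} (h1 : L.le a b) (h2 : L.lt b c) :
    L.lt a c := by letI := L; exact lt_of_le_of_lt h1 h2

theorem auxLO_lt_of_lt_of_le (L : LinearOrder α) {a b c : α} (h1 : L.lt a b) (h2 : L.le b c) :
    L.lt a c := by letI := L; exact lt_of_lt_of_le h1 h2

theorem auxLO_lt_irrefl (L : LinearOrder α) (a : α) : ¬ L.lt a a := by
  letI := L; exact lt_irrefl a

theorem auxLO_lt_asymm (L : LinearOrder α) {a b : α} (h : L.lt a b) : ¬ L.lt b a := by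
  letI := L; exact fun h' => lt_asymm h h'

theorem auxLO_exists_max (L : LinearOrder α) (S : Set α) (hfin : S.Finite) (hne : S.Nonempty) :
    ∃ b ∈ S, ∀ a ∈ S, L.le a b := by
  letI := L
  obtain ⟨b, hb, hmax⟩ := Set.Finite.exists_maximalFor id S hfin hne
  refine ⟨b, hb, fun a ha => ?_⟩
  rcases le_total a b with h | h
  · exact h
  · exact hmax ha h

end AuxOrder

theorem auxMatching_ext {M W : Type*} {μ ν : Matching M W}
    (h : ∀ m, μ.menMatch m = ν.menMatch m) : μ = ν := by
  have hw : ∀ w, μ.womenMatch w = ν.womenMatch w := by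
    intro w
    rcases hμ : μ.womenMatch w with _ | m
    · rcases hν : ν.womenMatch w with _ | m
      · rfl
      · exfalso
        have h2 : ν.menMatch m = some w := (ν.consistent m w).2 hν
        have h3 : μ.menMatch m = some w := by rw [h m]; exact h2
        have h4 : μ.womenMatch w = some m := (μ.consistent m w).1 h3
        rw [hμ] at h4; exact absurd h4 (by simp)
    · have h2 : μ.menMatch m = some w := (μ.consistent m w).2 hμ
      have h3 : ν.menMatch m = some w := by rw [← h m]; exact h2
      have h4 : ν.womenMatch w = some m := (ν.consistent m w).1 h3
      rw [h4]
  rcases μ with ⟨f, g, c⟩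
  rcases ν with ⟨f', g', c'⟩
  have hf : f = f' := funext h
  have hg : g = g' := funext hw
  subst hf; subst hg; rfl
/-! ### A sequential men-proposing deferred acceptance algorithm -/

section DA
open Classical
attribute [local instance] Classical.propDecidable

variable {M W : Type*}

structure AuxSt (M W : Type*) where
  tried : M → Set W
  hold : W → Option M

variable (P : Profile M W)

def auxCand (s : AuxSt M W) (m : M) : Set (Option W) :=
  insert none (Option.some '' {w | w ∉ s.tried m})

def auxFree (s : AuxSt M W) (m : M) : Prop := ∀ w, s.hold w ≠ some m

noncomputable def auxNextTried (s : AuxSt M W) (m : M) (w : W) : M → Set W :=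
  fun m' => if m' = m then insert w (s.tried m') else s.tried m'

noncomputable def auxNextHold (s : AuxSt M W) (m : M) (w : W) : W → Option M :=
  fun w' => if w' = w then
    (if (P.womenPref w).lt (s.hold w) (some m) then some m else s.hold w)
  else s.hold w'

def auxIsStep (s s' : AuxSt M W) : Prop :=
  ∃ m w, auxFree s m ∧ w ∉ s.tried m ∧
    (∀ x ∈ auxCand s m, (P.menPref m).le x (some w)) ∧
    s'.tried = auxNextTried s m w ∧ s'.hold = auxNextHold P s m w

noncomputable def auxNext (s : AuxSt M W) : AuxSt M W :=
  if h : ∃ s', auxIsStep P s s' then h.choose else s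

noncomputable def auxRun : ℕ → AuxSt M W
  | 0 => ⟨fun _ => ∅, fun _ => none⟩
  | n + 1 => auxNext P (auxRun n)

theorem auxRun_succ (n : ℕ) : auxRun P (n + 1) = auxNext P (auxRun P n) := rfl

theorem auxCand_none (s : AuxSt M W) (m : M) : none ∈ auxCand s m := Set.mem_insert _ _

theorem auxCand_some {s : AuxSt M W} {m : M} {w : W} (h : w ∉ s.tried m) :
    some w ∈ auxCand s m := Set.mem_insert_of_mem _ ⟨w, h, rfl⟩

theorem auxCand_elim {s : AuxSt M W} {m : M} {x : Option W} (h : x ∈ auxCand s m) :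
    x = none ∨ ∃ w, w ∉ s.tried m ∧ x = some w := by
  rcases h with h | ⟨w, hw, rfl⟩
  · exact Or.inl h
  · exact Or.inr ⟨w, hw, rfl⟩

theorem auxCand_antitone {s s' : AuxSt M W} {m : M} (h : s.tried m ⊆ s'.tried m) :
    auxCand s' m ⊆ auxCand s m := by
  intro x hx
  rcases auxCand_elim hx with rfl | ⟨w, hw, rfl⟩
  · exact auxCand_none s m
  · exact auxCand_some (fun hin => hw (h hin))

theorem aux_next_eq_or_step (s : AuxSt M W) :
    auxNext P s = s ∨ auxIsStep P s (auxNext P s) := by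
  by_cases h : ∃ s', auxIsStep P s s'
  · right; rw [auxNext, dif_pos h]; exact h.choose_spec
  · left; rw [auxNext, dif_neg h]

theorem aux_tried_subset (s : AuxSt M W) (m : M) : s.tried m ⊆ (auxNext P s).tried m := by
  rcases aux_next_eq_or_step P s with he | hs
  · rw [he]
  · obtain ⟨mc, wc, _, _, _, htr, _⟩ := hs
    rw [htr]; unfold auxNextTried
    by_cases hm : m = mc
    · rw [if_pos hm]; exact Set.subset_insert _ _
    · rw [if_neg hm]

theorem aux_hold_le (s : AuxSt M W) (w : W) :
    (P.womenPref w).le (s.hold w) ((auxNext P s).hold w) := by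
  rcases aux_next_eq_or_step P s with he | hs
  · rw [he]; exact auxLO_le_refl _ _
  · obtain ⟨mc, wc, _, _, _, _, hho⟩ := hs
    rw [hho]; unfold auxNextHold
    by_cases hw : w = wc
    · subst hw; rw [if_pos rfl]
      by_cases hlt : (P.womenPref w).lt (s.hold w) (some mc)
      · rw [if_pos hlt]; exact auxLO_le_of_lt _ hlt
      · rw [if_neg hlt]; exact auxLO_le_refl _ _
    · rw [if_neg hw]; exact auxLO_le_refl _ _

theorem aux_tried_mono {k n : ℕ} (h : k ≤ n) (m : M) :
    (auxRun P k).tried m ⊆ (auxRun P n).tried m := by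
  induction n with
  | zero => rw [Nat.le_zero.1 h]
  | succ n ih =>
    rcases Nat.lt_or_ge k (n + 1) with h' | h'
    · exact fun w hw => aux_tried_subset P (auxRun P n) m (ih (Nat.lt_succ_iff.1 h') hw)
    · rw [Nat.le_antisymm h h']

theorem aux_hold_mono {k n : ℕ} (h : k ≤ n) (w : W) :
    (P.womenPref w).le ((auxRun P k).hold w) ((auxRun P n).hold w) := by
  induction n with
  | zero => rw [Nat.le_zero.1 h]; exact auxLO_le_refl _ _
  | succ n ih =>
    rcases Nat.lt_or_ge k (n + 1) with h' | h'
    · exact auxLO_le_trans _ (ih (Nat.lt_succ_iff.1 h')) (aux_hold_le P (auxRun P n) w)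
    · rw [Nat.le_antisymm h h']; exact auxLO_le_refl _ _

def auxStepAt (s : AuxSt M W) (m : M) (w : W) : Prop :=
  auxFree s m ∧ w ∉ s.tried m ∧ (∀ x ∈ auxCand s m, (P.menPref m).le x (some w)) ∧
    (auxNext P s).tried = auxNextTried s m w ∧ (auxNext P s).hold = auxNextHold P s m w

theorem aux_stepAt_of_change {s : AuxSt M W} {m : M} {w : W}
    (h1 : w ∉ s.tried m) (h2 : w ∈ (auxNext P s).tried m) : auxStepAt P s m w := by
  rcases aux_next_eq_or_step P s with he | hs
  · rw [he] at h2; exact absurd h2 h1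
  · obtain ⟨mc, wc, hf, hnt, hc, htr, hho⟩ := hs
    have hmw : m = mc ∧ w = wc := by
      rw [htr] at h2; unfold auxNextTried at h2
      by_cases hmc : m = mc
      · refine ⟨hmc, ?_⟩
        rw [if_pos hmc] at h2
        rcases Set.mem_insert_iff.1 h2 with h2 | h2
        · exact h2
        · exact absurd h2 h1
      · rw [if_neg hmc] at h2; exact absurd h2 h1
    obtain ⟨rfl, rfl⟩ := hmw
    exact ⟨hf, hnt, hc, htr, hho⟩

theorem aux_change_unique {s : AuxSt M W} {m : M} {w : W} {m' : M} {w' : W}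
    (hst : auxStepAt P s m w) (h1 : w' ∉ s.tried m') (h2 : w' ∈ (auxNext P s).tried m') :
    m' = m ∧ w' = w := by
  rw [hst.2.2.2.1] at h2; unfold auxNextTried at h2
  by_cases hmc : m' = m
  · refine ⟨hmc, ?_⟩
    rw [if_pos hmc] at h2
    rcases Set.mem_insert_iff.1 h2 with h2 | h2
    · exact h2
    · exact absurd h2 h1
  · rw [if_neg hmc] at h2; exact absurd h2 h1

def auxEv (n : ℕ) (m : M) (w : W) : Prop :=
  w ∉ (auxRun P n).tried m ∧ w ∈ (auxRun P (n + 1)).tried m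

theorem aux_stepAt_of_ev {n : ℕ} {m : M} {w : W} (h : auxEv P n m w) :
    auxStepAt P (auxRun P n) m w :=
  aux_stepAt_of_change P h.1 h.2

theorem aux_exists_ev {m : M} {w : W} {n : ℕ} (h : w ∈ (auxRun P n).tried m) :
    ∃ k < n, auxEv P k m w := by
  induction n with
  | zero => exact absurd h (by intro hx; exact hx)
  | succ n ih =>
    by_cases h' : w ∈ (auxRun P n).tried m
    · obtain ⟨k, hk, he⟩ := ih h'
      exact ⟨k, Nat.lt_succ_of_lt hk, he⟩
    · exact ⟨n, Nat.lt_succ_self n, h', h⟩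

theorem aux_hold_ge_of_ev {n : ℕ} {m : M} {w : W} (h : auxEv P n m w) :
    (P.womenPref w).le (some m) ((auxRun P (n + 1)).hold w) := by
  have hst := aux_stepAt_of_ev P h
  rw [auxRun_succ, hst.2.2.2.2]; unfold auxNextHold; rw [if_pos rfl]
  by_cases hlt : (P.womenPref w).lt ((auxRun P n).hold w) (some m)
  · rw [if_pos hlt]; exact auxLO_le_refl _ _
  · rw [if_neg hlt]; exact (auxLO_not_lt _).1 hlt

theorem aux_hold_persist {n k n' : ℕ} {m : M} {w : W} (hev : auxEv P n m w)
    (hfin : (auxRun P n').hold w = some m) (h1 : n < k) (h2 : k ≤ n') :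
    (auxRun P k).hold w = some m := by
  have ha : (P.womenPref w).le (some m) ((auxRun P k).hold w) :=
    auxLO_le_trans _ (aux_hold_ge_of_ev P hev) (aux_hold_mono P h1 w)
  have hb : (P.womenPref w).le ((auxRun P k).hold w) (some m) := by
    rw [← hfin]; exact aux_hold_mono P h2 w
  exact auxLO_antisymm _ hb ha

end DA
section DA2
open Classical
attribute [local instance] Classical.propDecidable

variable {M W : Type*} (P : Profile M W)

structure AuxInv (P : Profile M W) (s : AuxSt M W) : Prop where
  i1 : ∀ w m, s.hold w = some m → w ∈ s.tried m
  i2 : ∀ w, (P.womenPref w).le none (s.hold w)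
  i3 : ∀ m w, w ∈ s.tried m → (P.womenPref w).le (some m) (s.hold w)
  i4 : ∀ w w' m, s.hold w = some m → s.hold w' = some m → w = w'
  i5 : ∀ m w, w ∈ s.tried m → ∀ x ∈ auxCand s m, (P.menPref m).le x (some w)
  i7 : ∀ ν, Stable ν P → ∀ m w, ν.menMatch m = some w → w ∈ s.tried m → s.hold w = some m

theorem aux_inv_init : AuxInv P (auxRun P 0) where
  i1 := fun w m h => (Option.some_ne_none m (h.symm : some m = none)).elim
  i2 := fun w => auxLO_le_refl _ _
  i3 := fun m w h => absurd h (fun hx => hx)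
  i4 := fun w w' m h _ => (Option.some_ne_none m (h.symm : some m = none)).elim
  i5 := fun m w h => absurd h (fun hx => hx)
  i7 := fun ν _ m w _ h => absurd h (fun hx => hx)

theorem aux_inv_next {s : AuxSt M W} (hI : AuxInv P s) : AuxInv P (auxNext P s) := by
  rcases aux_next_eq_or_step P s with he | hs
  · rw [he]; exact hI
  obtain ⟨mc, wc, hfree, hnt, hcand, htr, hho⟩ := hs
  have htr' : ∀ m, (auxNext P s).tried m =
      if m = mc then insert wc (s.tried m) else s.tried m := by
    intro m; rw [htr]; rfl
  have hho' : ∀ w, (auxNext P s).hold w =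
      if w = wc then (if (P.womenPref wc).lt (s.hold wc) (some mc) then some mc else s.hold wc)
      else s.hold w := by
    intro w; rw [hho]; rfl
  have htmem : ∀ {m w}, w ∈ (auxNext P s).tried m → (m = mc ∧ w = wc) ∨ w ∈ s.tried m := by
    intro m w h
    rw [htr' m] at h
    by_cases hm : m = mc
    · rw [if_pos hm] at h
      rcases Set.mem_insert_iff.1 h with h | h
      · exact Or.inl ⟨hm, h⟩
      · exact Or.inr h
    · rw [if_neg hm] at h; exact Or.inr h
  have htsub : ∀ m, s.tried m ⊆ (auxNext P s).tried m := aux_tried_subset P s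
  have hhle : ∀ w, (P.womenPref w).le (s.hold w) ((auxNext P s).hold w) := aux_hold_le P s
  have hhmem : ∀ {x m}, (auxNext P s).hold x = some m →
      (x = wc ∧ (s.hold wc = some m ∨ m = mc)) ∨ (x ≠ wc ∧ s.hold x = some m) := by
    intro x m h
    rw [hho' x] at h
    by_cases hx : x = wc
    · rw [if_pos hx] at h
      refine Or.inl ⟨hx, ?_⟩
      by_cases hlt : (P.womenPref wc).lt (s.hold wc) (some mc)
      · rw [if_pos hlt] at h; exact Or.inr (Option.some.inj h).symm
      · rw [if_neg hlt] at h; exact Or.inl h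
    · rw [if_neg hx] at h; exact Or.inr ⟨hx, h⟩
  constructor
  · -- i1
    intro w m h
    rcases hhmem h with ⟨hx, hc⟩ | ⟨_, h'⟩
    · subst hx
      rcases hc with h' | h'
      · exact htsub m (hI.i1 w m h')
      · subst h'
        rw [htr' m, if_pos rfl]; exact Set.mem_insert _ _
    · exact htsub m (hI.i1 w m h')
  · -- i2
    intro w
    rw [hho' w]
    by_cases hw : w = wc
    · subst hw; rw [if_pos rfl]
      by_cases hlt : (P.womenPref w).lt (s.hold w) (some mc)
      · rw [if_pos hlt]
        exact auxLO_le_trans _ (hI.i2 w) (auxLO_le_of_lt _ hlt)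
      · rw [if_neg hlt]; exact hI.i2 w
    · rw [if_neg hw]; exact hI.i2 w
  · -- i3
    intro m w h
    rcases htmem h with ⟨hm, hw⟩ | h'
    · subst hm; subst hw
      rw [hho' w, if_pos rfl]
      by_cases hlt : (P.womenPref w).lt (s.hold w) (some m)
      · rw [if_pos hlt]; exact auxLO_le_refl _ _
      · rw [if_neg hlt]; exact (auxLO_not_lt _).1 hlt
    · exact auxLO_le_trans _ (hI.i3 m w h') (hhle w)
  · -- i4
    intro w w' m h h'
    rcases hhmem h with ⟨hx1, hc1⟩ | ⟨hne1, h1⟩ <;>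
      rcases hhmem h' with ⟨hx2, hc2⟩ | ⟨hne2, h2⟩
    · rw [hx1, hx2]
    · exfalso
      rcases hc1 with hc1 | hc1
      · exact hne2 (hI.i4 wc w' m hc1 h2).symm
      · exact hfree w' (hc1 ▸ h2)
    · exfalso
      rcases hc2 with hc2 | hc2
      · exact hne1 (hI.i4 w wc m h1 hc2)
      · exact hfree w (hc2 ▸ h1)
    · exact hI.i4 w w' m h1 h2
  · -- i5
    intro m w h x hx
    have hx' : x ∈ auxCand s m := auxCand_antitone (htsub m) hx
    rcases htmem h with ⟨hm, hw⟩ | h'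
    · subst hm; subst hw; exact hcand x hx'
    · exact hI.i5 m w h' x hx'
  · -- i7
    intro ν hν m w hνm h
    rcases htmem h with ⟨hm, hw⟩ | hwtr
    · -- new pair : m = mc, w = wc
      subst hm; subst hw
      rw [hho' w, if_pos rfl]
      by_cases hlt : (P.womenPref w).lt (s.hold w) (some m)
      · rw [if_pos hlt]
      · exfalso
        have hle : (P.womenPref w).le (some m) (s.hold w) := (auxLO_not_lt _).1 hlt
        rcases hh : s.hold w with _ | m₁
        · rw [hh] at hle
          have hIR : (P.womenPref w).le none (ν.womenMatch w) := hν.1.2 w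
          rw [(ν.consistent m w).1 hνm] at hIR
          exact absurd (auxLO_antisymm _ hle hIR) (by simp)
        · have hm₁ : m₁ ≠ m := fun he => hfree w (by rw [hh, he])
          have hlt₁ : (P.womenPref w).lt (some m) (some m₁) :=
            auxLO_lt_of_le_of_ne _ (hh ▸ hle) (fun hc => hm₁ (Option.some.inj hc).symm)
          have hwctried : w ∈ s.tried m₁ := hI.i1 w m₁ hh
          have hmside : (P.menPref m₁).lt (ν.menMatch m₁) (some w) := by
            rcases hx : ν.menMatch m₁ with _ | w'
            · exact auxLO_lt_of_le_of_ne _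
                (hI.i5 m₁ w hwctried none (auxCand_none s m₁)) (by simp)
            · have hw' : w' ≠ w := by
                intro he; subst he
                have h1 : ν.womenMatch w' = some m₁ := (ν.consistent m₁ w').1 hx
                have h2 : ν.womenMatch w' = some m := (ν.consistent m w').1 hνm
                rw [h1] at h2
                exact hm₁ (Option.some.inj h2)
              have hw'nt : w' ∉ s.tried m₁ := fun hin => by
                have hh' := hI.i7 ν hν m₁ w' hx hin
                exact hw' (hI.i4 w' w m₁ hh' hh)
              exact auxLO_lt_of_le_of_ne _
                (hI.i5 m₁ w hwctried (some w') (auxCand_some hw'nt))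
                (fun hc => hw' (Option.some.inj hc))
          have hwside : (P.womenPref w).lt (ν.womenMatch w) (some m₁) := by
            rw [(ν.consistent m w).1 hνm]; exact hlt₁
          exact hν.2 m₁ w ⟨hmside, hwside⟩
    · -- old pair
      have hold : s.hold w = some m := hI.i7 ν hν m w hνm hwtr
      rw [hho' w]
      by_cases hw : w = wc
      · subst hw; rw [if_pos rfl]
        by_cases hlt : (P.womenPref w).lt (s.hold w) (some mc)
        · exfalso
          have hmmc : m ≠ mc := fun he => hfree w (by rw [hold, he])
          have hltm : (P.womenPref w).lt (some m) (some mc) := hold ▸ hlt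
          have hmside : (P.menPref mc).lt (ν.menMatch mc) (some w) := by
            rcases hx : ν.menMatch mc with _ | w'
            · exact auxLO_lt_of_le_of_ne _ (hcand none (auxCand_none s mc)) (by simp)
            · have hw' : w' ≠ w := by
                intro he; subst he
                have h1 : ν.womenMatch w' = some mc := (ν.consistent mc w').1 hx
                have h2 : ν.womenMatch w' = some m := (ν.consistent m w').1 hνm
                rw [h1] at h2
                exact hmmc (Option.some.inj h2).symm
              have hw'nt : w' ∉ s.tried mc := fun hin =>
                hfree w' (hI.i7 ν hν mc w' hx hin)
              exact auxLO_lt_of_le_of_ne _ (hcand (some w') (auxCand_some hw'nt))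
                (fun hc => hw' (Option.some.inj hc))
          have hwside : (P.womenPref w).lt (ν.womenMatch w) (some mc) := by
            rw [(ν.consistent m w).1 hνm]; exact hltm
          exact hν.2 mc w ⟨hmside, hwside⟩
        · rw [if_neg hlt]; exact hold
      · rw [if_neg hw]; exact hold

theorem aux_inv_run (n : ℕ) : AuxInv P (auxRun P n) := by
  induction n with
  | zero => exact aux_inv_init P
  | succ n ih => exact aux_inv_next P ih

end DA2
section DA3
open Classical
attribute [local instance] Classical.propDecidable

variable {M W : Type*} [Fintype M] [Fintype W] (P : Profile M W)

noncomputable def auxSize (s : AuxSt M W) : ℕ := Set.ncard {p : M × W | p.2 ∈ s.tried p.1}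

theorem aux_size_lt {s : AuxSt M W} (h : auxNext P s ≠ s) : auxSize s < auxSize (auxNext P s) := by
  rcases aux_next_eq_or_step P s with he | hs
  · exact absurd he h
  · obtain ⟨m, w, hf, hnt, hc, htr, hho⟩ := hs
    have hset : {p : M × W | p.2 ∈ (auxNext P s).tried p.1} =
        insert (m, w) {p : M × W | p.2 ∈ s.tried p.1} := by
      ext ⟨a, b⟩
      simp only [Set.mem_setOf_eq, htr, Set.mem_insert_iff, Prod.mk.injEq]
      unfold auxNextTried
      by_cases hab : a = m
      · subst hab; rw [if_pos rfl]
        simp only [Set.mem_insert_iff, true_and]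
      · rw [if_neg hab]
        simp [hab]
    have hnmem : (m, w) ∉ {p : M × W | p.2 ∈ s.tried p.1} := hnt
    unfold auxSize
    rw [hset, Set.ncard_insert_of_notMem hnmem (Set.toFinite _)]
    exact Nat.lt_succ_self _

theorem aux_exists_fix : ∃ N, auxNext P (auxRun P N) = auxRun P N := by
  by_contra h
  push_neg at h
  have hgrow : ∀ n, n ≤ auxSize (auxRun P n) := by
    intro n
    induction n with
    | zero => exact Nat.zero_le _
    | succ n ih =>
      have h2 : auxSize (auxRun P n) < auxSize (auxRun P (n + 1)) := aux_size_lt P (h n)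
      omega
  have hbd : auxSize (auxRun P (Fintype.card (M × W) + 1)) ≤ Fintype.card (M × W) := by
    unfold auxSize
    calc Set.ncard {p : M × W | p.2 ∈ (auxRun P (Fintype.card (M × W) + 1)).tried p.1}
        ≤ (Set.univ : Set (M × W)).ncard :=
          Set.ncard_le_ncard (Set.subset_univ _) (Set.toFinite _)
      _ = Fintype.card (M × W) := by rw [Set.ncard_univ, Nat.card_eq_fintype_card]
  have := hgrow (Fintype.card (M × W) + 1)
  omega

noncomputable def auxN : ℕ := (aux_exists_fix P).choose

theorem auxN_spec : auxNext P (auxRun P (auxN P)) = auxRun P (auxN P) :=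
  (aux_exists_fix P).choose_spec

theorem aux_run_stat {n : ℕ} (h : auxN P ≤ n) : auxRun P n = auxRun P (auxN P) := by
  induction h with
  | refl => rfl
  | step h ih => rename_i n' h'; rw [auxRun_succ, ih, auxN_spec]

theorem aux_ev_lt_N {n : ℕ} {m : M} {w : W} (h : auxEv P n m w) : n < auxN P := by
  by_contra h'
  push_neg at h'
  have h1 : auxRun P n = auxRun P (auxN P) := aux_run_stat P h'
  have h2 : auxRun P (n + 1) = auxRun P (auxN P) := aux_run_stat P (Nat.le_succ_of_le h')
  exact h.1 (by rw [h1, ← h2]; exact h.2)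

theorem aux_terminal_no_step : ¬ ∃ s', auxIsStep P (auxRun P (auxN P)) s' := by
  intro hex
  have hns : auxNext P (auxRun P (auxN P)) = hex.choose := by
    rw [auxNext, dif_pos hex]
  obtain ⟨m, w, hf, hnt, hc, htr, hho⟩ := hex.choose_spec
  have h2 : w ∈ hex.choose.tried m := by
    rw [htr]; unfold auxNextTried; rw [if_pos rfl]; exact Set.mem_insert _ _
  rw [← hns, auxN_spec] at h2
  exact hnt h2

theorem aux_terminal_free {m : M} (hf : auxFree (auxRun P (auxN P)) m) :
    ∀ x ∈ auxCand (auxRun P (auxN P)) m, (P.menPref m).le x none := by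
  by_contra h
  push_neg at h
  obtain ⟨x, hx, hnle⟩ := h
  have hlt : (P.menPref m).lt none x := hnle
  obtain ⟨b, hb, hmax⟩ := auxLO_exists_max (P.menPref m) (auxCand (auxRun P (auxN P)) m)
    (Set.toFinite _) ⟨none, auxCand_none _ m⟩
  rcases auxCand_elim hb with rfl | ⟨w, hw, rfl⟩
  · exact auxLO_lt_irrefl _ none (auxLO_lt_of_lt_of_le _ hlt (hmax x hx))
  · exact aux_terminal_no_step P
      ⟨⟨auxNextTried (auxRun P (auxN P)) m w, auxNextHold P (auxRun P (auxN P)) m w⟩,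
        m, w, hf, hw, fun y hy => hmax y hy, rfl, rfl⟩

end DA3
section DA4
open Classical
attribute [local instance] Classical.propDecidable

variable {M W : Type*} [Fintype M] [Fintype W] (P : Profile M W)

noncomputable def auxMenMatch (m : M) : Option W :=
  if h : ∃ w, (auxRun P (auxN P)).hold w = some m then some h.choose else none

noncomputable def auxFinal : Matching M W where
  menMatch := auxMenMatch P
  womenMatch w := (auxRun P (auxN P)).hold w
  consistent m w := by
    constructor
    · intro h
      unfold auxMenMatch at h
      by_cases he : ∃ w', (auxRun P (auxN P)).hold w' = some m
      · rw [dif_pos he] at h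
        have h2 := he.choose_spec
        rwa [Option.some.inj h] at h2
      · rw [dif_neg he] at h; exact absurd h (by simp)
    · intro h
      have he : ∃ w', (auxRun P (auxN P)).hold w' = some m := ⟨w, h⟩
      unfold auxMenMatch
      rw [dif_pos he]
      have h2 := he.choose_spec
      rw [(aux_inv_run P (auxN P)).i4 _ _ _ h2 h]

theorem auxFinal_some {m : M} {w : W} :
    (auxFinal P).menMatch m = some w ↔ (auxRun P (auxN P)).hold w = some m :=
  (auxFinal P).consistent m w

theorem auxFinal_none {m : M} :
    (auxFinal P).menMatch m = none ↔ auxFree (auxRun P (auxN P)) m := by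
  constructor
  · intro h w hw
    have h2 : (auxFinal P).menMatch m = some w := (auxFinal_some P).2 hw
    rw [h] at h2; exact absurd h2 (by simp)
  · intro hf
    show auxMenMatch P m = none
    unfold auxMenMatch
    rw [dif_neg]
    exact fun ⟨w, hw⟩ => hf w hw

theorem auxFinal_stable : Stable (auxFinal P) P := by
  have hI := aux_inv_run P (auxN P)
  refine ⟨⟨?_, ?_⟩, ?_⟩
  · -- IR men
    intro m
    rcases hm : (auxFinal P).menMatch m with _ | w
    · exact auxLO_le_refl _ _
    · have hw : (auxRun P (auxN P)).hold w = some m := (auxFinal_some P).1 hm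
      exact hI.i5 m w (hI.i1 w m hw) none (auxCand_none _ m)
  · -- IR women
    intro w
    exact hI.i2 w
  · -- no blocking pair
    intro m w ⟨hb1, hb2⟩
    by_cases hw : w ∈ (auxRun P (auxN P)).tried m
    · have h3 := hI.i3 m w hw
      exact auxLO_lt_irrefl _ _ (auxLO_lt_of_lt_of_le _ hb2 h3)
    · have hcand : some w ∈ auxCand (auxRun P (auxN P)) m := auxCand_some hw
      rcases hm : (auxFinal P).menMatch m with _ | w₀
      · have hf : auxFree (auxRun P (auxN P)) m := (auxFinal_none P).1 hm
        have := aux_terminal_free P hf (some w) hcand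
        rw [hm] at hb1
        exact auxLO_lt_irrefl _ _ (auxLO_lt_of_lt_of_le _ hb1 this)
      · have hw₀ : (auxRun P (auxN P)).hold w₀ = some m := (auxFinal_some P).1 hm
        have := hI.i5 m w₀ (hI.i1 w₀ m hw₀) (some w) hcand
        rw [hm] at hb1
        exact auxLO_lt_irrefl _ _ (auxLO_lt_of_lt_of_le _ hb1 this)

theorem auxFinal_opt : MenOptimalStable (auxFinal P) P := by
  have hI := aux_inv_run P (auxN P)
  refine ⟨auxFinal_stable P, ?_⟩
  intro ν hν m
  rcases hx : ν.menMatch m with _ | w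
  · rcases hm : (auxFinal P).menMatch m with _ | w₀
    · exact auxLO_le_refl _ _
    · have hw₀ : (auxRun P (auxN P)).hold w₀ = some m := (auxFinal_some P).1 hm
      exact hI.i5 m w₀ (hI.i1 w₀ m hw₀) none (auxCand_none _ m)
  · by_cases hw : w ∈ (auxRun P (auxN P)).tried m
    · have := hI.i7 ν hν m w hx hw
      rw [(auxFinal_some P).2 this]
      exact auxLO_le_refl _ _
    · have hcand : some w ∈ auxCand (auxRun P (auxN P)) m := auxCand_some hw
      rcases hm : (auxFinal P).menMatch m with _ | w₀
      · have hf : auxFree (auxRun P (auxN P)) m := (auxFinal_none P).1 hm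
        exact aux_terminal_free P hf (some w) hcand
      · have hw₀ : (auxRun P (auxN P)).hold w₀ = some m := (auxFinal_some P).1 hm
        exact hI.i5 m w₀ (hI.i1 w₀ m hw₀) (some w) hcand

theorem aux_mos_unique {μ₁ μ₂ : Matching M W} (h1 : MenOptimalStable μ₁ P)
    (h2 : MenOptimalStable μ₂ P) : μ₁ = μ₂ :=
  auxMatching_ext fun m => auxLO_antisymm _ (h2.2 μ₁ h1.1 m) (h1.2 μ₂ h2.1 m)

theorem aux_mpda_spec : MenOptimalStable (mpda P) P := by
  have h : ∃ μ : Matching M W, MenOptimalStable μ P := ⟨auxFinal P, auxFinal_opt P⟩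
  unfold mpda
  rw [dif_pos h]
  exact h.choose_spec

theorem aux_mpda_eq : mpda P = auxFinal P :=
  aux_mos_unique P (aux_mpda_spec P) (auxFinal_opt P)

end DA4
section Blocking
open Classical
attribute [local instance] Classical.propDecidable

variable {M W : Type*} [Fintype M] [Fintype W]

/-- The Gale–Sotomayor blocking lemma: if `ν` is individually rational and the set `M'` of
men strictly preferring `ν` to the men-optimal stable matching is nonempty, then there is
a pair blocking `ν` whose man is outside `M'` and whose woman is matched by `ν` to `M'`. -/
theorem aux_blocking (P : Profile M W) (ν : Matching M W)
    (hIR : IndividuallyRational ν P)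
    (hne : ∃ m, (P.menPref m).lt ((mpda P).menMatch m) (ν.menMatch m)) :
    ∃ m₁ w₁, ¬ (P.menPref m₁).lt ((mpda P).menMatch m₁) (ν.menMatch m₁) ∧
      (∃ m₂, (P.menPref m₂).lt ((mpda P).menMatch m₂) (ν.menMatch m₂) ∧
        ν.menMatch m₂ = some w₁) ∧
      Blocks m₁ w₁ ν P := by
  rw [aux_mpda_eq P] at hne ⊢
  set μ := auxFinal P with hμdef
  have hμst : Stable μ P := auxFinal_stable P
  set M' : Set M := {m | (P.menPref m).lt (μ.menMatch m) (ν.menMatch m)} with hM'def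
  have hνsome : ∀ m ∈ M', ∃ w, ν.menMatch m = some w := by
    intro m hm
    rcases hx : ν.menMatch m with _ | w
    · exfalso
      have hmm : (P.menPref m).lt (μ.menMatch m) none := by rw [← hx]; exact hm
      exact auxLO_lt_irrefl _ _ (auxLO_lt_of_le_of_lt _ (hμst.1.1 m) hmm)
    · exact ⟨w, rfl⟩
  by_cases hc : ∀ w₁, (∃ m₂ ∈ M', ν.menMatch m₂ = some w₁) →
      ∃ m₃ ∈ M', μ.menMatch m₃ = some w₁
  · -- CASE 2 : trace argument
    -- cardinality bookkeeping
    set S₁ : Set W := {w | ∃ m ∈ M', ν.menMatch m = some w} with hS₁def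
    set S₂ : Set W := {w | ∃ m ∈ M', μ.menMatch m = some w} with hS₂def
    have hS₁₂ : S₁ ⊆ S₂ := fun w hw => hc w hw
    set Mm : Set M := {m | m ∈ M' ∧ ∃ w, μ.menMatch m = some w} with hMmdef
    have hono : Function.Injective (Option.some : W → Option W) := Option.some_injective W
    have h1img : Option.some '' S₁ = ν.menMatch '' M' := by
      ext x; constructor
      · rintro ⟨w, ⟨m, hm, hmw⟩, rfl⟩; exact ⟨m, hm, hmw⟩
      · rintro ⟨m, hm, rfl⟩
        obtain ⟨w, hw⟩ := hνsome m hm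
        exact ⟨w, ⟨m, hm, hw⟩, hw.symm⟩
    have hinjν : Set.InjOn ν.menMatch M' := by
      intro a ha b hb hab
      obtain ⟨w, hw⟩ := hνsome a ha
      have hwb : ν.menMatch b = some w := by rw [← hab]; exact hw
      have h1 := (ν.consistent a w).1 hw
      have h2 := (ν.consistent b w).1 hwb
      rw [h1] at h2; exact Option.some.inj h2
    have hc₁ : S₁.ncard = M'.ncard := by
      rw [← Set.ncard_image_of_injective S₁ hono, h1img, Set.ncard_image_of_injOn hinjν]
    have h2img : Option.some '' S₂ = μ.menMatch '' Mm := by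
      ext x; constructor
      · rintro ⟨w, ⟨m, hm, hmw⟩, rfl⟩; exact ⟨m, ⟨hm, w, hmw⟩, hmw⟩
      · rintro ⟨m, ⟨hm, w, hw⟩, rfl⟩; exact ⟨w, ⟨m, hm, hw⟩, hw.symm⟩
    have hinjμ : Set.InjOn μ.menMatch Mm := by
      intro a ha b hb hab
      obtain ⟨_, w, hw⟩ := ha
      have hwb : μ.menMatch b = some w := by rw [← hab]; exact hw
      have h1 := (μ.consistent a w).1 hw
      have h2 := (μ.consistent b w).1 hwb
      rw [h1] at h2; exact Option.some.inj h2
    have hc₂ : S₂.ncard = Mm.ncard := by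
      rw [← Set.ncard_image_of_injective S₂ hono, h2img, Set.ncard_image_of_injOn hinjμ]
    have hMm' : Mm ⊆ M' := fun m hm => hm.1
    have hle12 : S₁.ncard ≤ S₂.ncard := Set.ncard_le_ncard hS₁₂ (Set.toFinite _)
    have hleM : M'.ncard ≤ Mm.ncard := by rw [← hc₁, ← hc₂]; exact hle12
    have hMmeq : Mm = M' := Set.eq_of_subset_of_ncard_le hMm' hleM (Set.toFinite _)
    have hSeq : S₁ = S₂ := by
      refine Set.eq_of_subset_of_ncard_le hS₁₂ ?_ (Set.toFinite _)
      rw [hc₁, hc₂, hMmeq]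
    have hA : ∀ m ∈ M', ∃ w, μ.menMatch m = some w ∧ w ∈ S₁ := by
      intro m hm
      have hmm : m ∈ Mm := by rw [hMmeq]; exact hm
      obtain ⟨_, w, hw⟩ := hmm
      refine ⟨w, hw, ?_⟩
      rw [hSeq]; exact ⟨m, hm, hw⟩
    -- the run
    set N := auxN P with hNdef
    have hI : ∀ n, AuxInv P (auxRun P n) := fun n => aux_inv_run P n
    have hmw : ∀ {m w}, μ.menMatch m = some w ↔ (auxRun P N).hold w = some m :=
      fun {m w} => auxFinal_some P
    have htriedN : ∀ {m w}, μ.menMatch m = some w → w ∈ (auxRun P N).tried m :=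
      fun h => (hI N).i1 _ _ (hmw.1 h)
    have hνtried : ∀ m ∈ M', ∀ {w'}, ν.menMatch m = some w' → w' ∈ (auxRun P N).tried m := by
      intro m hm w' hw'
      obtain ⟨wb, hwb, _⟩ := hA m hm
      by_contra hnt
      have hcd : some w' ∈ auxCand (auxRun P N) m := auxCand_some hnt
      have hle := (hI N).i5 m wb (htriedN hwb) (some w') hcd
      have hltm : (P.menPref m).lt (some wb) (some w') := by rw [← hwb, ← hw']; exact hm
      exact auxLO_lt_irrefl _ _ (auxLO_lt_of_lt_of_le _ hltm hle)
    -- the set of proposal times by men of M'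
    set E : Set ℕ := {n | ∃ m w, m ∈ M' ∧ auxEv P n m w} with hEdef
    obtain ⟨mh, hmh⟩ := hne
    have hEne : E.Nonempty := by
      obtain ⟨wh, hwh⟩ := hνsome mh hmh
      obtain ⟨k, hk, he⟩ := aux_exists_ev P (hνtried mh hmh hwh)
      exact ⟨k, mh, wh, hmh, he⟩
    have hEfin : E.Finite :=
      Set.Finite.subset (Set.finite_Iio N) (fun n hn => by
        obtain ⟨m, w, _, he⟩ := hn
        exact aux_ev_lt_N P he)
    obtain ⟨n₀, hn₀E, hn₀max⟩ := Set.Finite.exists_maximalFor id E hEfin hEne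
    have hmax : ∀ k ∈ E, k ≤ n₀ := by
      intro k hk
      rcases le_total k n₀ with h | h
      · exact h
      · exact hn₀max hk h
    obtain ⟨m₀, w₀, hm₀M, hev₀⟩ := hn₀E
    have hst₀ := aux_stepAt_of_ev P hev₀
    obtain ⟨hfree₀, hnt₀, hcand₀, htr₀, hho₀⟩ := hst₀
    have hn₀N : n₀ < N := aux_ev_lt_N P hev₀
    -- Claim 1 : w₀ is m₀'s final match
    obtain ⟨wb₀, hwb₀, hwb₀S⟩ := hA m₀ hm₀M
    have hhold₀ : (auxRun P N).hold wb₀ = some m₀ := hmw.1 hwb₀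
    obtain ⟨n₁, hn₁, hev₁⟩ := aux_exists_ev P (htriedN hwb₀)
    have hn₁le : n₁ ≤ n₀ := hmax n₁ ⟨m₀, wb₀, hm₀M, hev₁⟩
    have hclaim1 : wb₀ = w₀ := by
      rcases lt_or_eq_of_le hn₁le with hlt | heq
      · exfalso
        have := aux_hold_persist P hev₁ hhold₀ hlt (le_of_lt hn₀N)
        exact hfree₀ wb₀ this
      · subst heq
        exact (aux_change_unique P ⟨hfree₀, hnt₀, hcand₀, htr₀, hho₀⟩ hev₁.1 hev₁.2).2
    have hμm₀ : μ.menMatch m₀ = some w₀ := by rw [← hclaim1]; exact hwb₀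
    have hw₀S : w₀ ∈ S₁ := by rw [← hclaim1]; exact hwb₀S
    have hholdN₀ : (auxRun P N).hold w₀ = some m₀ := by rw [← hclaim1]; exact hhold₀
    -- Claim 2 : the hold of w₀ at time n₀ is below m₀
    have hlt₀ : (P.womenPref w₀).lt ((auxRun P n₀).hold w₀) (some m₀) := by
      by_contra hnlt
      have hup : (auxRun P (n₀ + 1)).hold w₀ = (auxRun P n₀).hold w₀ := by
        rw [auxRun_succ, hho₀]; unfold auxNextHold; rw [if_pos rfl, if_neg hnlt]
      have hne' : (auxRun P n₀).hold w₀ ≠ some m₀ := hfree₀ w₀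
      have hle1 : (P.womenPref w₀).le (some m₀) ((auxRun P n₀).hold w₀) :=
        (auxLO_not_lt _).1 hnlt
      have hle2 : (P.womenPref w₀).le ((auxRun P n₀).hold w₀) (some m₀) := by
        have hmono := aux_hold_mono P (show n₀ + 1 ≤ N from hn₀N) w₀
        rw [hholdN₀] at hmono
        rw [← hup]; exact hmono
      exact hne' (auxLO_antisymm _ hle2 hle1)
    -- Claim 3 : w₀'s ν-partner m' is in M'
    obtain ⟨m', hm'M, hνm'⟩ := hw₀S
    have hm'm₀ : m' ≠ m₀ := by
      intro he; subst he
      have hx : (P.menPref m').lt (μ.menMatch m') (ν.menMatch m') := hm'M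
      rw [hμm₀, hνm'] at hx
      exact auxLO_lt_irrefl _ _ hx
    -- Claim 4 : m' proposed to w₀ strictly before n₀
    obtain ⟨n₂, hn₂, hev₂⟩ := aux_exists_ev P (hνtried m' hm'M hνm')
    have hn₂lt : n₂ < n₀ := by
      rcases lt_or_eq_of_le (hmax n₂ ⟨m', w₀, hm'M, hev₂⟩) with h | h
      · exact h
      · exfalso; subst h
        exact hm'm₀ (aux_change_unique P ⟨hfree₀, hnt₀, hcand₀, htr₀, hho₀⟩ hev₂.1 hev₂.2).1
    -- Claim 5 : w₀'s hold at n₀ is at least m'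
    have h5 : (P.womenPref w₀).le (some m') ((auxRun P n₀).hold w₀) := by
      have hmem : w₀ ∈ (auxRun P n₀).tried m' :=
        aux_tried_mono P (show n₂ + 1 ≤ n₀ from hn₂lt) m' hev₂.2
      exact (hI n₀).i3 m' w₀ hmem
    -- Claim 6 : she holds some man m₁
    rcases hh₀ : (auxRun P n₀).hold w₀ with _ | m₁
    · exfalso
      rw [hh₀] at h5
      have hIRw : (P.womenPref w₀).le none (some m') := by
        have := hIR.2 w₀; rwa [(ν.consistent m' w₀).1 hνm'] at this
      exact absurd (auxLO_antisymm _ h5 hIRw) (by simp)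
    rw [hh₀] at h5 hlt₀
    have hm₁m₀ : m₁ ≠ m₀ := by
      intro he; exact hfree₀ w₀ (by rw [hh₀, he])
    have hw₀trm₁ : w₀ ∈ (auxRun P n₀).tried m₁ := (hI n₀).i1 w₀ m₁ hh₀
    -- Claim 7 : m₁ is not in M'
    have hm₁M : m₁ ∉ M' := by
      intro hm₁
      obtain ⟨wb₁, hwb₁, _⟩ := hA m₁ hm₁
      have hhold₁ : (auxRun P N).hold wb₁ = some m₁ := hmw.1 hwb₁
      obtain ⟨n₃, hn₃, hev₃⟩ := aux_exists_ev P (htriedN hwb₁)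
      rcases lt_or_eq_of_le (hmax n₃ ⟨m₁, wb₁, hm₁, hev₃⟩) with h | h
      · have hp := aux_hold_persist P hev₃ hhold₁ h (le_of_lt hn₀N)
        have heq := (hI n₀).i4 wb₁ w₀ m₁ hp hh₀
        rw [heq, hholdN₀] at hhold₁
        exact hm₁m₀ (Option.some.inj hhold₁).symm
      · subst h
        exact hm₁m₀ (aux_change_unique P ⟨hfree₀, hnt₀, hcand₀, htr₀, hho₀⟩ hev₃.1 hev₃.2).1
    -- Claim 8 : man side of blocking
    have hμm₁lt : (P.menPref m₁).lt (μ.menMatch m₁) (some w₀) := by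
      rcases hx : μ.menMatch m₁ with _ | w₂
      · exact auxLO_lt_of_le_of_ne _
          ((hI n₀).i5 m₁ w₀ hw₀trm₁ none (auxCand_none _ m₁)) (by simp)
      · have hw₂ : w₂ ≠ w₀ := by
          intro he; subst he
          have hh := hmw.1 hx
          rw [hholdN₀] at hh
          exact hm₁m₀ (Option.some.inj hh).symm
        have hw₂nt : w₂ ∉ (auxRun P n₀).tried m₁ := by
          intro hin
          obtain ⟨n₄, hn₄, hev₄⟩ := aux_exists_ev P hin
          have hp := aux_hold_persist P hev₄ (hmw.1 hx) hn₄ (le_of_lt hn₀N)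
          exact hw₂ ((hI n₀).i4 w₂ w₀ m₁ hp hh₀)
        exact auxLO_lt_of_le_of_ne _
          ((hI n₀).i5 m₁ w₀ hw₀trm₁ (some w₂) (auxCand_some hw₂nt))
          (fun hcc => hw₂ (Option.some.inj hcc))
    have hbm : (P.menPref m₁).lt (ν.menMatch m₁) (some w₀) := by
      have hle : (P.menPref m₁).le (ν.menMatch m₁) (μ.menMatch m₁) := (auxLO_not_lt _).1 hm₁M
      exact auxLO_lt_of_le_of_lt _ hle hμm₁lt
    have hbw : (P.womenPref w₀).lt (ν.womenMatch w₀) (some m₁) := by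
      rw [(ν.consistent m' w₀).1 hνm']
      refine auxLO_lt_of_le_of_ne _ h5 ?_
      intro hcc
      rw [Option.some.inj hcc] at hm'M
      exact hm₁M hm'M
    exact ⟨m₁, w₀, hm₁M, ⟨m', hm'M, hνm'⟩, hbm, hbw⟩
  · -- CASE 1 : static argument
    push_neg at hc
    obtain ⟨w₁, ⟨m₂, hm₂, hνm₂⟩, hnot⟩ := hc
    have hν₂w : ν.womenMatch w₁ = some m₂ := (ν.consistent m₂ w₁).1 hνm₂
    have h1 : (P.menPref m₂).lt (μ.menMatch m₂) (some w₁) := by rw [← hνm₂]; exact hm₂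
    have h2 : (P.womenPref w₁).le (some m₂) (μ.womenMatch w₁) :=
      (auxLO_not_lt _).1 (fun hb => hμst.2 m₂ w₁ ⟨h1, hb⟩)
    have hIRw : (P.womenPref w₁).le none (some m₂) := by
      have := hIR.2 w₁; rwa [hν₂w] at this
    obtain ⟨m₁, hm₁⟩ : ∃ m₁, μ.womenMatch w₁ = some m₁ := by
      rcases hx : μ.womenMatch w₁ with _ | m₁
      · exfalso; rw [hx] at h2
        exact absurd (auxLO_antisymm _ h2 hIRw) (by simp)
      · exact ⟨m₁, rfl⟩
    have hμm₁ : μ.menMatch m₁ = some w₁ := (μ.consistent m₁ w₁).2 hm₁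
    have hm₁M : ¬ (P.menPref m₁).lt (μ.menMatch m₁) (ν.menMatch m₁) := by
      intro hin; exact hnot m₁ hin hμm₁
    have hνne : ν.menMatch m₁ ≠ some w₁ := by
      intro he
      have hcc := (ν.consistent m₁ w₁).1 he
      rw [hν₂w] at hcc
      have hm12 : m₂ = m₁ := Option.some.inj hcc
      exact hm₁M (by rw [← hm12]; exact hm₂)
    have hble : (P.menPref m₁).le (ν.menMatch m₁) (some w₁) := by
      have := (auxLO_not_lt _).1 hm₁M; rwa [hμm₁] at this
    have hbm : (P.menPref m₁).lt (ν.menMatch m₁) (some w₁) :=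
      auxLO_lt_of_le_of_ne _ hble hνne
    have hbw : (P.womenPref w₁).lt (ν.womenMatch w₁) (some m₁) := by
      rw [hν₂w]
      rw [hm₁] at h2
      refine auxLO_lt_of_le_of_ne _ h2 ?_
      intro hcc
      exact hm₁M (by rw [← Option.some.inj hcc]; exact hm₂)
    exact ⟨m₁, w₁, hm₁M, ⟨m₂, hm₂, hνm₂⟩, hbm, hbw⟩

end Blocking
/-- under any manipulation of MPDA, every woman weakly prefers her
match at the manipulated profile to her match at the true profile. -/
theorem women_weakly_better_off [Fintype M] [Fintype W]
    (P Q : Profile M W) (Sm : Set M) (Sw : Set W)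
    (h : MpdaManipulates P Q Sm Sw) (w : W) :
    (P.womenPref w).le ((mpda P).womenMatch w) ((mpda Q).womenMatch w) := by
  obtain ⟨hQm, hQw, hSm, hSw⟩ := h
  have hPs := aux_mpda_spec P
  have hQs := aux_mpda_spec Q
  by_contra hcon
  have hlt : (P.womenPref w).lt ((mpda Q).womenMatch w) ((mpda P).womenMatch w) :=
    (auxLO_not_le _).1 hcon
  have hwSw : w ∉ Sw := fun hin => auxLO_lt_asymm _ hlt (hSw w hin)
  have hQPw : Q.womenPref w = P.womenPref w := hQw w hwSw
  -- the manipulated outcome is individually rational at the true profile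
  have hIR : IndividuallyRational (mpda Q) P := by
    constructor
    · intro m
      by_cases hm : m ∈ Sm
      · exact auxLO_le_trans _ (hPs.1.1.1 m) (auxLO_le_of_lt _ (hSm m hm))
      · have := hQs.1.1.1 m; rwa [hQm m hm] at this
    · intro w'
      by_cases hw' : w' ∈ Sw
      · exact auxLO_le_trans _ (hPs.1.1.2 w') (auxLO_le_of_lt _ (hSw w' hw'))
      · have := hQs.1.1.2 w'; rwa [hQw w' hw'] at this
  -- w's partner under mpda P strictly gains, so the improving set of men is nonempty
  have hIRQw : (Q.womenPref w).le none ((mpda Q).womenMatch w) := hQs.1.1.2 w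
  rw [hQPw] at hIRQw
  obtain ⟨m', hμw⟩ : ∃ m', (mpda P).womenMatch w = some m' := by
    rcases hx : (mpda P).womenMatch w with _ | m'
    · exfalso; rw [hx] at hlt
      exact auxLO_lt_irrefl _ _ (auxLO_lt_of_le_of_lt _ hIRQw hlt)
    · exact ⟨m', rfl⟩
  have hμm' : (mpda P).menMatch m' = some w := ((mpda P).consistent m' w).2 hμw
  have hw2 : (Q.womenPref w).lt ((mpda Q).womenMatch w) (some m') := by
    rw [hQPw, ← hμw]; exact hlt
  have hnb1 : ¬ (Q.menPref m').lt ((mpda Q).menMatch m') (some w) :=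
    fun hb => hQs.1.2 m' w ⟨hb, hw2⟩
  have hle1 : (Q.menPref m').le (some w) ((mpda Q).menMatch m') := (auxLO_not_lt _).1 hnb1
  have hne1 : (mpda Q).menMatch m' ≠ some w := by
    intro he
    have hcc : (mpda Q).womenMatch w = some m' := ((mpda Q).consistent m' w).1 he
    rw [hcc] at hw2
    exact auxLO_lt_irrefl _ _ hw2
  have hltQ : (Q.menPref m').lt (some w) ((mpda Q).menMatch m') :=
    auxLO_lt_of_le_of_ne _ hle1 (Ne.symm hne1)
  have hm'M : (P.menPref m').lt ((mpda P).menMatch m') ((mpda Q).menMatch m') := by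
    by_cases hm : m' ∈ Sm
    · exact hSm m' hm
    · rw [← hQm m' hm, hμm']; exact hltQ
  -- apply the blocking lemma
  obtain ⟨m₁, w₁, hm₁, ⟨m₂, hm₂, hν₂⟩, hblocks⟩ :=
    aux_blocking P (mpda Q) hIR ⟨m', hm'M⟩
  -- the woman w₁ strictly loses from P to Q, hence w₁ ∉ Sw
  have hν₂w : (mpda Q).womenMatch w₁ = some m₂ := ((mpda Q).consistent m₂ w₁).1 hν₂
  have hμblt : (P.menPref m₂).lt ((mpda P).menMatch m₂) (some w₁) := by
    rw [← hν₂]; exact hm₂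
  have hle2 : (P.womenPref w₁).le (some m₂) ((mpda P).womenMatch w₁) :=
    (auxLO_not_lt _).1 (fun hb => hPs.1.2 m₂ w₁ ⟨hμblt, hb⟩)
  have hne2 : (mpda P).womenMatch w₁ ≠ some m₂ := by
    intro he
    have hcc : (mpda P).menMatch m₂ = some w₁ := ((mpda P).consistent m₂ w₁).2 he
    rw [hcc] at hμblt
    exact auxLO_lt_irrefl _ _ hμblt
  have hWm : (P.womenPref w₁).lt ((mpda Q).womenMatch w₁) ((mpda P).womenMatch w₁) := by
    rw [hν₂w]
    exact auxLO_lt_of_le_of_ne _ hle2 (Ne.symm hne2)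
  have hw₁Sw : w₁ ∉ Sw := fun hin => auxLO_lt_asymm _ hWm (hSw w₁ hin)
  have hm₁Sm : m₁ ∉ Sm := fun hin => hm₁ (hSm m₁ hin)
  obtain ⟨hbm, hbw⟩ := hblocks
  exact hQs.1.2 m₁ w₁ ⟨by rw [hQm m₁ hm₁Sm]; exact hbm, by rw [hQw w₁ hw₁Sw]; exact hbw⟩
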